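/- Let ρ_a = (1/6)·[[2,a,0,0],[a,1,0,0],[0,0,1,a],[0,0,a,2]] with a ∈ [0,√2]. Then ρ_a is a density matrix with eigenvalues 1/4 ± (1/12)√(4a²+1), each with multiplicity 2; its reduced state ρ_a^A = I/2 (capacity 0) and ρ_a^B = (1/2)[[1, 2a/3],[2a/3, 1]] has largest eigenvalue 1/2 + a/3. -/

import Mathlib

open Matrix
open scoped ComplexOrder

/-- Partial trace over the second qubit. -/
def trB (ρ : Matrix (Fin 4) (Fin 4) ℂ) : Matrix (Fin 2) (Fin 2) ℂ :=
  !![ρ 0 0 + ρ 1 1, ρ 0 2 + ρ 1 3;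
     ρ 2 0 + ρ 3 1, ρ 2 2 + ρ 3 3]

/-- Partial trace over the first qubit. -/
def trA (ρ : Matrix (Fin 4) (Fin 4) ℂ) : Matrix (Fin 2) (Fin 2) ℂ :=
  !![ρ 0 0 + ρ 2 2, ρ 0 1 + ρ 2 3;
     ρ 1 0 + ρ 3 2, ρ 1 1 + ρ 3 3]

/-- The single-parameter state `ρ_a`. -/
noncomputable def rhoA (a : ℝ) : Matrix (Fin 4) (Fin 4) ℂ :=
  (1 / 6 : ℂ) • !![2, (a : ℂ), 0, 0;
                   (a : ℂ), 1, 0, 0;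
                   0, 0, 1, (a : ℂ);
                   0, 0, (a : ℂ), 2]

/-- The largest eigenvalue of a Hermitian matrix. -/
noncomputable def maxEig {n : ℕ} {M : Matrix (Fin n) (Fin n) ℂ}
    (hM : M.IsHermitian) : ℝ := ⨆ i, hM.eigenvalues i

open Polynomial in
lemma det_smul_one_sub {n : ℕ} {A : Matrix (Fin n) (Fin n) ℂ} (hA : A.IsHermitian) (x : ℂ) :
    det (x • (1 : Matrix (Fin n) (Fin n) ℂ) - A) = ∏ i, (x - (hA.eigenvalues i : ℂ)) := by
  have hU : (hA.eigenvectorUnitary : Matrix (Fin n) (Fin n) ℂ) *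
      star (hA.eigenvectorUnitary : Matrix (Fin n) (Fin n) ℂ) = 1 :=
    (Matrix.mem_unitaryGroup_iff).mp hA.eigenvectorUnitary.2
  have h1 : x • (1 : Matrix (Fin n) (Fin n) ℂ) - A =
      (hA.eigenvectorUnitary : Matrix (Fin n) (Fin n) ℂ) *
        (x • (1 : Matrix (Fin n) (Fin n) ℂ) - diagonal (RCLike.ofReal ∘ hA.eigenvalues)) *
        star (hA.eigenvectorUnitary : Matrix (Fin n) (Fin n) ℂ) := by
    have hsp := hA.spectral_theorem
    simp only [Unitary.conjStarAlgAut_apply, Unitary.coe_star] at hsp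
    rw [Matrix.mul_sub, Matrix.sub_mul, ← hsp]
    congr 1
    rw [Matrix.mul_smul, Matrix.mul_one, Matrix.smul_mul, hU]
  rw [h1, det_mul_right_comm, hU, one_mul]
  have h2 : x • (1 : Matrix (Fin n) (Fin n) ℂ) - diagonal (RCLike.ofReal ∘ hA.eigenvalues) =
      diagonal (fun i => x - (hA.eigenvalues i : ℂ)) := by
    rw [smul_one_eq_diagonal, diagonal_sub]
    rfl
  rw [h2, det_diagonal]

open Polynomial in
lemma eig_multiset {n : ℕ} {A : Matrix (Fin n) (Fin n) ℂ} (hA : A.IsHermitian)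
    (m : Multiset ℝ)
    (h : ∀ x : ℂ, ∏ i, (x - (hA.eigenvalues i : ℂ)) = ((m.map (fun r : ℝ => x - (r : ℂ))).prod)) :
    (Finset.univ.val.map hA.eigenvalues : Multiset ℝ) = m := by
  apply Multiset.map_injective Complex.ofReal_injective
  have hP : (((Finset.univ.val.map hA.eigenvalues).map (Complex.ofReal)).map
      (fun r => X - C r)).prod = ((m.map (Complex.ofReal)).map (fun r => X - C r)).prod := by
    apply Polynomial.funext
    intro x
    have e1 : ∀ (s : Multiset ℂ), ((s.map (fun r => X - C r)).prod.eval x) =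
        (s.map (fun r => x - r)).prod := by
      intro s
      rw [Polynomial.eval_multiset_prod, Multiset.map_map]
      congr 1
      simp [Multiset.map_map]
    rw [e1, e1, Multiset.map_map, Multiset.map_map]
    have := h x
    rw [Finset.prod_eq_multiset_prod] at this
    simpa [Multiset.map_map] using this
  have := congrArg Polynomial.roots hP
  rwa [Polynomial.roots_multiset_prod_X_sub_C, Polynomial.roots_multiset_prod_X_sub_C] at this

lemma det4 (a : ℝ) (x : ℂ) :
    det (x • (1 : Matrix (Fin 4) (Fin 4) ℂ) - rhoA a) =
      (x ^ 2 - x / 2 + (2 - (a : ℂ) ^ 2) / 36) ^ 2 := by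
  have hM : x • (1 : Matrix (Fin 4) (Fin 4) ℂ) - rhoA a =
      !![x - 1/3, -((a:ℂ)/6), 0, 0;
         -((a:ℂ)/6), x - 1/6, 0, 0;
         0, 0, x - 1/6, -((a:ℂ)/6);
         0, 0, -((a:ℂ)/6), x - 1/3] := by
    ext i j
    fin_cases i <;> fin_cases j <;>
      simp [rhoA, Matrix.one_apply, Matrix.vecHead, Matrix.vecTail] <;> ring
  rw [hM]
  simp [Matrix.det_succ_row_zero, Fin.sum_univ_succ, Fin.succAbove, -Fin.val_fin_lt,
    Matrix.vecHead, Matrix.vecTail]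
  ring

lemma det2 (a : ℝ) (x : ℂ) :
    det (x • (1 : Matrix (Fin 2) (Fin 2) ℂ) - trA (rhoA a)) =
      (x - ((1 / 2 - a / 3 : ℝ) : ℂ)) * (x - ((1 / 2 + a / 3 : ℝ) : ℂ)) := by
  have hM : x • (1 : Matrix (Fin 2) (Fin 2) ℂ) - trA (rhoA a) =
      !![x - 1/2, -((a:ℂ)/3); -((a:ℂ)/3), x - 1/2] := by
    ext i j
    fin_cases i <;> fin_cases j <;>
      simp [trA, rhoA, Matrix.one_apply, Matrix.vecHead, Matrix.vecTail] <;> ring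
  rw [hM, det_fin_two_of]
  push_cast
  ring

/-- `ρ_a` is a density matrix with eigenvalues `1/4 ± (1/12)√(4a²+1)`, each of
multiplicity two; its reduced state on `A` is maximally mixed and its reduced state
on `B` is `(1/2)[[1, 2a/3],[2a/3, 1]]`, with largest eigenvalue `1/2 + a/3`. -/
theorem stmt_10
    (a : ℝ) (ha0 : 0 ≤ a) (ha2 : a ≤ Real.sqrt 2)
    (hρ : (rhoA a).IsHermitian) (hB : (trA (rhoA a)).IsHermitian) :
    (rhoA a).PosSemidef
    ∧ (rhoA a).trace = 1
    ∧ (Finset.univ.val.map hρ.eigenvalues : Multiset ℝ) =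
        {1 / 4 - Real.sqrt (4 * a ^ 2 + 1) / 12, 1 / 4 - Real.sqrt (4 * a ^ 2 + 1) / 12,
         1 / 4 + Real.sqrt (4 * a ^ 2 + 1) / 12, 1 / 4 + Real.sqrt (4 * a ^ 2 + 1) / 12}
    ∧ trB (rhoA a) = (1 / 2 : ℂ) • 1
    ∧ trA (rhoA a) = (1 / 2 : ℂ) • !![1, ((2 * a / 3 : ℝ) : ℂ); ((2 * a / 3 : ℝ) : ℂ), 1]
    ∧ maxEig hB = 1 / 2 + a / 3 := by
  set s : ℝ := Real.sqrt (4 * a ^ 2 + 1) with hs_def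
  have hs_nonneg : 0 ≤ s := Real.sqrt_nonneg _
  have hs : ((s : ℂ)) ^ 2 = 4 * (a : ℂ) ^ 2 + 1 := by
    have : s ^ 2 = 4 * a ^ 2 + 1 := Real.sq_sqrt (by positivity)
    calc ((s : ℂ)) ^ 2 = ((s ^ 2 : ℝ) : ℂ) := by push_cast; ring
    _ = _ := by rw [this]; push_cast; ring
  have ha2' : a ^ 2 ≤ 2 := by
    nlinarith [Real.sq_sqrt (by norm_num : (0:ℝ) ≤ 2), Real.sqrt_nonneg (2:ℝ)]
  have hs3 : s ≤ 3 := by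
    rw [hs_def, show (3:ℝ) = Real.sqrt 9 by
      rw [show (9:ℝ) = 3 ^ 2 by norm_num, Real.sqrt_sq (by norm_num)]]
    exact Real.sqrt_le_sqrt (by nlinarith)
  -- eigenvalue multiset of rhoA a
  have hm4 : (Finset.univ.val.map hρ.eigenvalues : Multiset ℝ) =
      ({1 / 4 - s / 12, 1 / 4 - s / 12, 1 / 4 + s / 12, 1 / 4 + s / 12} : Multiset ℝ) := by
    apply eig_multiset hρ
    intro x
    rw [← det_smul_one_sub hρ x, det4 a x]
    simp only [Multiset.insert_eq_cons, Multiset.map_cons, Multiset.map_singleton,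
      Multiset.prod_cons, Multiset.prod_singleton]
    push_cast
    linear_combination ((2 * x ^ 2 - x + (2 - (a:ℂ) ^ 2) / 36 + 1 / 16 - ((s:ℂ)) ^ 2 / 144) / 144) * hs
  -- eigenvalue multiset of trA (rhoA a)
  have hm2 : (Finset.univ.val.map hB.eigenvalues : Multiset ℝ) =
      ({1 / 2 - a / 3, 1 / 2 + a / 3} : Multiset ℝ) := by
    apply eig_multiset hB
    intro x
    rw [← det_smul_one_sub hB x, det2 a x]
    simp [Multiset.insert_eq_cons]
  refine ⟨?_, ?_, ?_, ?_, ?_, ?_⟩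
  · -- PosSemidef
    apply hρ.posSemidef_iff_eigenvalues_nonneg.mpr
    intro i; show (0:ℝ) ≤ hρ.eigenvalues i
    have hmem : hρ.eigenvalues i ∈ (Finset.univ.val.map hρ.eigenvalues : Multiset ℝ) :=
      Multiset.mem_map_of_mem _ (Finset.mem_univ i)
    rw [hm4] at hmem
    simp only [Multiset.insert_eq_cons, Multiset.mem_cons, Multiset.mem_singleton] at hmem
    rcases hmem with h | h | h | h <;> rw [h] <;> linarith
  · -- trace
    simp [rhoA, Matrix.trace, Matrix.diag, Fin.sum_univ_four]
    norm_num
  · -- eigenvalues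
    exact hm4
  · -- trB
    ext i j
    fin_cases i <;> fin_cases j <;>
      simp [trB, rhoA, Matrix.one_apply, Matrix.vecHead, Matrix.vecTail] <;> norm_num
  · -- trA
    ext i j
    fin_cases i <;> fin_cases j <;>
      simp [trA, rhoA, Matrix.one_apply, Matrix.vecHead, Matrix.vecTail] <;> push_cast <;> ring
  · -- maxEig
    have hmem : ∀ i, hB.eigenvalues i = 1 / 2 - a / 3 ∨ hB.eigenvalues i = 1 / 2 + a / 3 := by
      intro i
      have : hB.eigenvalues i ∈ (Finset.univ.val.map hB.eigenvalues : Multiset ℝ) :=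
        Multiset.mem_map_of_mem _ (Finset.mem_univ i)
      rw [hm2] at this
      simpa using this
    have hmem' : (1 / 2 + a / 3) ∈ (Finset.univ.val.map hB.eigenvalues : Multiset ℝ) := by
      rw [hm2]; simp
    obtain ⟨i, _, hi⟩ := Multiset.mem_map.mp hmem'
    show (⨆ i, hB.eigenvalues i) = 1 / 2 + a / 3
    apply le_antisymm
    · apply ciSup_le
      intro j
      rcases hmem j with h | h <;> rw [h] <;> linarith
    · rw [← hi]
      exact le_ciSup (Set.Finite.bddAbove (Set.finite_range _)) i
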